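/- An entropy stable numerical flux yields semi-discrete total entropy decay on a periodic 1D grid: let N ≥ 1, Δx > 0, and let F be a numerical flux such that (r(q⁺) − r(q⁻)) · F(q⁻, q⁺) ≤ ρ⁺u⁺ − ρ⁻u⁻ for all admissible states q⁻, q⁺. If q_i : ℝ → ℝ⁴ (i ∈ ℤ/Nℤ) are differentiable curves of admissible states satisfying dq_i/dt = −(F(q_i, q_{i+1}) − F(q_{i−1}, q_i))/Δx, then d/dt Σ_{i ∈ ℤ/Nℤ} U(q_i(t)) Δx ≤ 0 for all t. -/

import Mathlib

open Real Matrix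

noncomputable section

/-- A state of the 2D compressible Euler equations: `(ρ, ρu, ρv, E)`. -/
abbrev EulerState := Fin 4 → ℝ

/-- Density. -/
def rho (q : EulerState) : ℝ := q 0
/-- x-momentum. -/
def mom1 (q : EulerState) : ℝ := q 1
/-- y-momentum. -/
def mom2 (q : EulerState) : ℝ := q 2
/-- Total energy. -/
def toten (q : EulerState) : ℝ := q 3
/-- Pressure `p = (γ-1)(E - (m₁² + m₂²)/(2ρ))`. -/
def pres (γ : ℝ) (q : EulerState) : ℝ :=
  (γ - 1) * (toten q - (mom1 q ^ 2 + mom2 q ^ 2) / (2 * rho q))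
/-- x-velocity `u = m₁/ρ`. -/
def uvel (q : EulerState) : ℝ := mom1 q / rho q
/-- y-velocity `v = m₂/ρ`. -/
def vvel (q : EulerState) : ℝ := mom2 q / rho q
/-- Admissible states: positive density and positive pressure. -/
def admissible (γ : ℝ) (q : EulerState) : Prop := 0 < rho q ∧ 0 < pres γ q
/-- Physical entropy `s = ln(p ρ^(-γ))`. -/
def entS (γ : ℝ) (q : EulerState) : ℝ := Real.log (pres γ q * rho q ^ (-γ))
/-- Entropy function `U = -ρ s/(γ-1)`. -/
def entU (γ : ℝ) (q : EulerState) : ℝ := -(rho q * entS γ q) / (γ - 1)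
/-- `β = ρ/(2p)`. -/
def betaCoef (γ : ℝ) (q : EulerState) : ℝ := rho q / (2 * pres γ q)
/-- Entropy variables `r(q)`. -/
def entVar (γ : ℝ) (q : EulerState) : EulerState :=
  ![(γ - entS γ q) / (γ - 1) - betaCoef γ q * (uvel q ^ 2 + vvel q ^ 2),
    2 * betaCoef γ q * uvel q,
    2 * betaCoef γ q * vvel q,
    -2 * betaCoef γ q]
/-- x-flux `f(q)`. -/
def fFlux (γ : ℝ) (q : EulerState) : EulerState :=
  ![rho q * uvel q,
    rho q * uvel q ^ 2 + pres γ q,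
    rho q * uvel q * vvel q,
    (toten q + pres γ q) * uvel q]
/-- y-flux `g(q)`. -/
def gFlux (γ : ℝ) (q : EulerState) : EulerState :=
  ![rho q * vvel q,
    rho q * uvel q * vvel q,
    rho q * vvel q ^ 2 + pres γ q,
    (toten q + pres γ q) * vvel q]
/-- x-entropy flux `φₓ = -ρ u s/(γ-1)`. -/
def phiX (γ : ℝ) (q : EulerState) : ℝ := -(rho q * uvel q * entS γ q) / (γ - 1)
/-- y-entropy flux `φ_y = -ρ v s/(γ-1)`. -/
def phiY (γ : ℝ) (q : EulerState) : ℝ := -(rho q * vvel q * entS γ q) / (γ - 1)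

/-- Logarithmic mean `(b-a)/(ln b - ln a)`, equal to `a` when `a = b`. -/
def logMean (a b : ℝ) : ℝ := if a = b then a else (b - a) / (Real.log b - Real.log a)

/-- The entropy conservative flux of Chandrashekar. -/
def chandrashekarFlux (γ : ℝ) (qm qp : EulerState) : EulerState :=
  let ρhat := logMean (rho qm) (rho qp)
  let ubar := (uvel qm + uvel qp) / 2
  let vbar := (vvel qm + vvel qp) / 2
  let βbar := (betaCoef γ qm + betaCoef γ qp) / 2
  let βhat := logMean (betaCoef γ qm) (betaCoef γ qp)
  let ρbar := (rho qm + rho qp) / 2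
  let ptil := ρbar / (2 * βbar)
  let vsqbar := (uvel qm ^ 2 + vvel qm ^ 2 + uvel qp ^ 2 + vvel qp ^ 2) / 2
  let Fρ := ρhat * ubar
  let Fρu := ubar * Fρ + ptil
  let Fρv := vbar * Fρ
  ![Fρ, Fρu, Fρv,
    (1 / (2 * (γ - 1) * βhat) - vsqbar / 2) * Fρ + ubar * Fρu + vbar * Fρv]

/-- Speed of sound `c = √(γ p/ρ)`. -/
def cSound (γ : ℝ) (q : EulerState) : ℝ := Real.sqrt (γ * pres γ q / rho q)
/-- Enthalpy `H = c²/(γ-1) + |v|²/2`. -/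
def enthalpyH (γ : ℝ) (q : EulerState) : ℝ :=
  cSound γ q ^ 2 / (γ - 1) + (uvel q ^ 2 + vvel q ^ 2) / 2
/-- The matrix `R` of right eigenvectors of the x-flux Jacobian. -/
def eigMat (γ : ℝ) (q : EulerState) : Matrix (Fin 4) (Fin 4) ℝ :=
  !![1, 1, 0, 1;
     uvel q - cSound γ q, uvel q, 0, uvel q + cSound γ q;
     vvel q, vvel q, -1, vvel q;
     enthalpyH γ q - cSound γ q * uvel q, (uvel q ^ 2 + vvel q ^ 2) / 2, -vvel q,
       enthalpyH γ q + cSound γ q * uvel q]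
/-- Barth's scaling matrix `S = diag(ρ/(2γ), (γ-1)ρ/γ, p, ρ/(2γ))`. -/
def scalMat (γ : ℝ) (q : EulerState) : Matrix (Fin 4) (Fin 4) ℝ :=
  Matrix.diagonal ![rho q / (2 * γ), (γ - 1) * rho q / γ, pres γ q, rho q / (2 * γ)]

/-- Entropy diffusion matrix `Q = R |Λ| S Rᵀ` for a diagonal `|Λ| = diag lam`. -/
def Qmat (γ : ℝ) (lam : Fin 4 → ℝ) (q : EulerState) : Matrix (Fin 4) (Fin 4) ℝ :=
  eigMat γ q * Matrix.diagonal lam * scalMat γ q * (eigMat γ q)ᵀ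

/-- Roe eigenvalues `(|u-c|, |u|, |u|, |u+c|)`. -/
def lamRoe (γ : ℝ) (q : EulerState) : Fin 4 → ℝ :=
  ![|uvel q - cSound γ q|, |uvel q|, |uvel q|, |uvel q + cSound γ q|]
/-- Kinetic energy stable eigenvalues `(|u|+c, |u|, |u|, |u|+c)`. -/
def lamKES (γ : ℝ) (q : EulerState) : Fin 4 → ℝ :=
  ![|uvel q| + cSound γ q, |uvel q|, |uvel q|, |uvel q| + cSound γ q]
/-- Local Mach number `M = |v|/c`. -/
def machNum (γ : ℝ) (q : EulerState) : ℝ :=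
  Real.sqrt (uvel q ^ 2 + vvel q ^ 2) / cSound γ q
/-- Rescaled speed of sound `c̃ = c max(min(M,1), M_cut)`. -/
def cTilde (γ Mcut : ℝ) (q : EulerState) : ℝ :=
  cSound γ q * max (min (machNum γ q) 1) Mcut
/-- Low Mach Roe eigenvalues `(|u-c̃|, |u|, |u|, |u+c̃|)`. -/
def lamRoeLM (γ Mcut : ℝ) (q : EulerState) : Fin 4 → ℝ :=
  ![|uvel q - cTilde γ Mcut q|, |uvel q|, |uvel q|, |uvel q + cTilde γ Mcut q|]
/-- Low Mach KES eigenvalues `(|u|+c̃, |u|, |u|, |u|+c̃)`. -/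
def lamKESLM (γ Mcut : ℝ) (q : EulerState) : Fin 4 → ℝ :=
  ![|uvel q| + cTilde γ Mcut q, |uvel q|, |uvel q|, |uvel q| + cTilde γ Mcut q]

lemma entS_eq_nice (γ : ℝ) (q : EulerState) (h : admissible γ q) :
    entS γ q = Real.log (pres γ q) - γ * Real.log (rho q) := by
  obtain ⟨hρ, hp⟩ := h
  rw [entS, Real.log_mul hp.ne' (Real.rpow_pos_of_pos hρ _).ne', Real.log_rpow hρ]
  ring

lemma entU_eq_nice (γ : ℝ) (q : EulerState) (h : admissible γ q) :
    entU γ q = -(rho q * (Real.log (pres γ q) - γ * Real.log (rho q))) / (γ - 1) := by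
  rw [entU, entS_eq_nice γ q h]

lemma hasDerivAt_entU_comp (γ : ℝ) (hγ : 1 < γ) (c : ℝ → EulerState) (c' : EulerState)
    (t : ℝ) (hadm : ∀ τ, admissible γ (c τ)) (hc : HasDerivAt c c' t) :
    HasDerivAt (fun τ => entU γ (c τ)) (entVar γ (c t) ⬝ᵥ c') t := by
  have hγ1 : γ - 1 ≠ 0 := by linarith
  have h0 : HasDerivAt (fun τ => c τ 0) (c' 0) t := hasDerivAt_pi.mp hc 0
  have h1 : HasDerivAt (fun τ => c τ 1) (c' 1) t := hasDerivAt_pi.mp hc 1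
  have h2 : HasDerivAt (fun τ => c τ 2) (c' 2) t := hasDerivAt_pi.mp hc 2
  have h3 : HasDerivAt (fun τ => c τ 3) (c' 3) t := hasDerivAt_pi.mp hc 3
  have hρpos : ∀ τ, 0 < c τ 0 := fun τ => (hadm τ).1
  set P : ℝ → ℝ := fun τ => pres γ (c τ) with hPdef
  have hPeq : ∀ τ, P τ = (γ - 1) * (c τ 3 - ((c τ 1) ^ 2 + (c τ 2) ^ 2) / (2 * c τ 0)) :=
    fun τ => rfl
  have hPpos : ∀ τ, 0 < P τ := fun τ => (hadm τ).2
  -- derivative of the pressure along the curve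
  have hnum : HasDerivAt (fun τ => (c τ 1) ^ 2 + (c τ 2) ^ 2)
      (2 * c t 1 * c' 1 + 2 * c t 2 * c' 2) t := by
    have := ((h1.pow 2).add (h2.pow 2))
    exact this.congr_deriv (by norm_num)
  have hden : HasDerivAt (fun τ => 2 * c τ 0) (2 * c' 0) t := h0.const_mul 2
  have hdenne : (2 : ℝ) * c t 0 ≠ 0 := by have := hρpos t; positivity
  have hfrac := hnum.div hden hdenne
  set P' : ℝ := (γ - 1) * (c' 3 -
      ((2 * c t 1 * c' 1 + 2 * c t 2 * c' 2) * (2 * c t 0) -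
        ((c t 1) ^ 2 + (c t 2) ^ 2) * (2 * c' 0)) / (2 * c t 0) ^ 2) with hP'def
  have hP : HasDerivAt P P' t := by
    have := ((h3.sub hfrac).const_mul (γ - 1))
    exact this
  have hlogP : HasDerivAt (fun τ => Real.log (P τ)) (P' / P t) t := hP.log (hPpos t).ne'
  have hlogρ : HasDerivAt (fun τ => Real.log (c τ 0)) (c' 0 / c t 0) t :=
    h0.log (hρpos t).ne'
  have hG : HasDerivAt
      (fun τ => -(c τ 0 * (Real.log (P τ) - γ * Real.log (c τ 0))) / (γ - 1))
      (-(c' 0 * (Real.log (P t) - γ * Real.log (c t 0)) +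
          c t 0 * (P' / P t - γ * (c' 0 / c t 0))) / (γ - 1)) t :=
    ((h0.mul (hlogP.sub (hlogρ.const_mul γ))).neg).div_const (γ - 1)
  have heq : (fun τ => entU γ (c τ)) =
      (fun τ => -(c τ 0 * (Real.log (P τ) - γ * Real.log (c τ 0))) / (γ - 1)) := by
    funext τ
    exact entU_eq_nice γ (c τ) (hadm τ)
  rw [heq]
  refine hG.congr_deriv ?_
  have hrρ : rho (c t) = c t 0 := rfl
  have hru : uvel (c t) = c t 1 / c t 0 := rfl
  have hrv : vvel (c t) = c t 2 / c t 0 := rfl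
  have hrβ : betaCoef γ (c t) = c t 0 / (2 * P t) := rfl
  have hrS : entS γ (c t) = Real.log (P t) - γ * Real.log (c t 0) := by
    rw [entS_eq_nice γ (c t) (hadm t)]; rfl
  simp only [entVar, dotProduct, Fin.sum_univ_four, Matrix.cons_val_zero,
    Matrix.cons_val_one, Matrix.head_cons, Matrix.cons_val_two, Matrix.tail_cons,
    Matrix.cons_val_three, hrρ, hru, hrv, hrβ, hrS]
  have hρne : c t 0 ≠ 0 := (hρpos t).ne'
  have hPne : P t ≠ 0 := (hPpos t).ne'
  rw [hP'def]
  field_simp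
  ring

/-- an entropy stable numerical flux yields semi-discrete total entropy
decay on a periodic 1D grid: if `dq_i/dt = −(F(q_i,q_{i+1}) − F(q_{i−1},q_i))/Δx` with
admissible states, then `d/dt Σ_i U(q_i(t)) Δx ≤ 0`. -/
theorem semidiscrete_entropy_decay (γ : ℝ) (hγ : 1 < γ)
    (N : ℕ) [NeZero N] (Δx : ℝ) (hΔx : 0 < Δx)
    (F : EulerState → EulerState → EulerState)
    (hF : ∀ qm qp : EulerState, admissible γ qm → admissible γ qp →
      (entVar γ qp - entVar γ qm) ⬝ᵥ F qm qp ≤ rho qp * uvel qp - rho qm * uvel qm)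
    (q : ZMod N → ℝ → EulerState)
    (hadm : ∀ i t, admissible γ (q i t))
    (hode : ∀ i t, HasDerivAt (q i)
      (-(Δx)⁻¹ • (F (q i t) (q (i + 1) t) - F (q (i - 1) t) (q i t))) t) :
    ∀ t : ℝ, deriv (fun τ => ∑ i : ZMod N, entU γ (q i τ) * Δx) t ≤ 0 := by
  intro t
  have hΔne : Δx ≠ 0 := hΔx.ne'
  set a : ZMod N → ℝ := fun i => entVar γ (q i t) ⬝ᵥ F (q i t) (q (i + 1) t) with ha
  set b : ZMod N → ℝ := fun i => entVar γ (q i t) ⬝ᵥ F (q (i - 1) t) (q i t) with hb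
  have hsum : HasDerivAt (fun τ => ∑ i : ZMod N, entU γ (q i τ) * Δx)
      (∑ i : ZMod N, (b i - a i)) t := by
    have hterm : ∀ i : ZMod N, HasDerivAt (fun τ => entU γ (q i τ) * Δx) (b i - a i) t := by
      intro i
      have h := (hasDerivAt_entU_comp γ hγ (q i) _ t (hadm i) (hode i t)).mul_const Δx
      refine h.congr_deriv ?_
      rw [ha, hb]
      simp only [dotProduct_smul, dotProduct_sub, smul_eq_mul]
      field_simp
      ring
    exact HasDerivAt.fun_sum (fun i _ => hterm i)
  rw [hsum.deriv]
  have hshift : ∀ (g : ZMod N → ℝ), ∑ i : ZMod N, g (i + 1) = ∑ i : ZMod N, g i :=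
    fun g => Fintype.sum_equiv (Equiv.addRight 1) _ _ (fun i => rfl)
  have hb1 : ∀ i : ZMod N, b (i + 1) = entVar γ (q (i + 1) t) ⬝ᵥ F (q i t) (q (i + 1) t) := by
    intro i; simp [hb]
  calc ∑ i : ZMod N, (b i - a i) = ∑ i : ZMod N, (b (i + 1) - a i) := by
        rw [Finset.sum_sub_distrib, Finset.sum_sub_distrib, hshift b]
    _ ≤ ∑ i : ZMod N,
        (rho (q (i + 1) t) * uvel (q (i + 1) t) - rho (q i t) * uvel (q i t)) := by
        apply Finset.sum_le_sum
        intro i _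
        rw [hb1 i, ha]
        calc entVar γ (q (i + 1) t) ⬝ᵥ F (q i t) (q (i + 1) t)
              - entVar γ (q i t) ⬝ᵥ F (q i t) (q (i + 1) t)
            = (entVar γ (q (i + 1) t) - entVar γ (q i t)) ⬝ᵥ F (q i t) (q (i + 1) t) := by
              rw [sub_dotProduct]
          _ ≤ _ := hF _ _ (hadm i t) (hadm (i + 1) t)
    _ = 0 := by
        rw [Finset.sum_sub_distrib, hshift (fun i => rho (q i t) * uvel (q i t)), sub_self]
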